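/- Let G be a group isomorphic to the alternating group A_5 acting on a finite set V of cardinality n. Suppose there are natural numbers a, b, c such that every element of G of order 2 fixes exactly a points of V, every element of order 3 fixes exactly b points of V, and every element of order 5 fixes exactly c points of V, where a = 2 or 4 divides a, b = 2 or 3 divides b, and c = 2 or 5 divides c. Then n ≡ 0, 2, 12, 20, 30, 32, 42, or 50 (mod 60). -/

import Mathlib

local instance : Fact (Nat.Prime 5) := ⟨by norm_num⟩
open MulAction

lemma fix_mod {G : Type*} [Group G] {V : Type*} [Fintype V] [DecidableEq V]
    [MulAction G V] (p : ℕ) [Fact p.Prime] (g : G) (hg : orderOf g = p) :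
    Fintype.card V ≡ (Finset.univ.filter fun x : V => g • x = x).card [MOD p] := by
  set H := Subgroup.zpowers g with hH
  have hcard : Nat.card H = p ^ 1 := by
    rw [pow_one, Nat.card_zpowers, hg]
  have hpg : IsPGroup p H := IsPGroup.of_card hcard
  have key := hpg.card_modEq_card_fixedPoints V
  have heq : fixedPoints H V = {x : V | g • x = x} := by
    ext x
    simp only [mem_fixedPoints, Set.mem_setOf_eq]
    constructor
    · intro h
      exact h ⟨g, Subgroup.mem_zpowers g⟩
    · rintro h ⟨y, hy⟩
      obtain ⟨k, rfl⟩ := hy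
      show (g ^ k) • x = x
      induction k using Int.induction_on with
      | zero => simp
      | succ i ih => rw [zpow_add_one, mul_smul, h, ih]
      | pred i ih =>
        have h' : g⁻¹ • x = x := by rw [inv_smul_eq_iff, h]
        rw [zpow_sub_one, mul_smul, h', ih]
  have : Nat.card (fixedPoints H V) =
      (Finset.univ.filter fun x : V => g • x = x).card := by
    rw [heq, Nat.card_eq_card_toFinset]
    congr 1
    ext x
    simp
  rw [this] at key
  simpa [Nat.card_eq_fintype_card] using key

lemma exists_order_elts :
    ∃ x y z : alternatingGroup (Fin 5),
      orderOf x = 2 ∧ orderOf y = 3 ∧ orderOf z = 5 := by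
  refine ⟨⟨Equiv.swap 0 1 * Equiv.swap 2 3, by
      rw [Equiv.Perm.mem_alternatingGroup]; decide⟩,
    ⟨Equiv.swap 0 1 * Equiv.swap 1 2, by
      rw [Equiv.Perm.mem_alternatingGroup]; decide⟩,
    ⟨finRotate 5, by rw [Equiv.Perm.mem_alternatingGroup]; decide⟩, ?_, ?_, ?_⟩
  · apply orderOf_eq_prime
    · exact Subtype.ext (by decide)
    · intro h
      rw [Subtype.ext_iff] at h
      exact absurd h (by decide)
  · apply orderOf_eq_prime
    · exact Subtype.ext (by decide)
    · intro h
      rw [Subtype.ext_iff] at h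
      exact absurd h (by decide)
  · apply orderOf_eq_prime
    · exact Subtype.ext (by decide)
    · intro h
      rw [Subtype.ext_iff] at h
      exact absurd h (by decide)

/-- Let a group isomorphic to `A₅` act on a finite set `V` of cardinality `n`.
Suppose each element of order 2 fixes exactly `a` points, each element of
order 3 fixes exactly `b` points, and each element of order 5 fixes exactly
`c` points, where `a = 2` or `4 ∣ a`, `b = 2` or `3 ∣ b`, and `c = 2` or
`5 ∣ c`.  Then `n ≡ 0, 2, 12, 20, 30, 32, 42, or 50 (mod 60)`. -/
theorem A5_necessity (G : Type*) [Group G] (V : Type*) [Fintype V] [DecidableEq V]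
    [MulAction G V]
    (hG : Nonempty (G ≃* alternatingGroup (Fin 5)))
    (n : ℕ) (hn : Fintype.card V = n) (a b c : ℕ)
    (ha : ∀ g : G, orderOf g = 2 →
      (Finset.univ.filter fun x : V => g • x = x).card = a)
    (hb : ∀ g : G, orderOf g = 3 →
      (Finset.univ.filter fun x : V => g • x = x).card = b)
    (hc : ∀ g : G, orderOf g = 5 →
      (Finset.univ.filter fun x : V => g • x = x).card = c)
    (haval : a = 2 ∨ 4 ∣ a)
    (hbval : b = 2 ∨ 3 ∣ b)
    (hcval : c = 2 ∨ 5 ∣ c) :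
    n % 60 = 0 ∨ n % 60 = 2 ∨ n % 60 = 12 ∨ n % 60 = 20 ∨
      n % 60 = 30 ∨ n % 60 = 32 ∨ n % 60 = 42 ∨ n % 60 = 50 := by
  obtain ⟨e⟩ := hG
  obtain ⟨x, y, z, hx, hy, hz⟩ := exists_order_elts
  have hx' : orderOf (e.symm x) = 2 := by rw [e.symm.orderOf_eq, hx]
  have hy' : orderOf (e.symm y) = 3 := by rw [e.symm.orderOf_eq, hy]
  have hz' : orderOf (e.symm z) = 5 := by rw [e.symm.orderOf_eq, hz]
  have h2 : n % 2 = a % 2 := by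
    have := fix_mod (G := G) (V := V) 2 (e.symm x) hx'
    rwa [hn, ha _ hx'] at this
  have h3 : n % 3 = b % 3 := by
    have := fix_mod (G := G) (V := V) 3 (e.symm y) hy'
    rwa [hn, hb _ hy'] at this
  have h5 : n % 5 = c % 5 := by
    have := fix_mod (G := G) (V := V) 5 (e.symm z) hz'
    rwa [hn, hc _ hz'] at this
  rcases haval with rfl | ⟨k, rfl⟩ <;> rcases hbval with rfl | ⟨l, rfl⟩ <;>
    rcases hcval with rfl | ⟨m, rfl⟩ <;> omega
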